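/- arXiv:1809.03553 — 4 statements merged into one kernel-verified Lean document; each statement's English description precedes it below -/
import Mathlib

section
/- Let Y be a random variable on a finite set 𝒴 with distribution P, and let S ⊆ 𝒴 with |S| = ℓ. Then Pr[Y ∈ S] ≤ E[min(1, ℓ / |{y' ∈ 𝒴 : P(y') ≥ P(Y)}|)]. -/
open Finset
open MeasureTheory

theorem stmt_4 {𝒴 : Type*} [Fintype 𝒴] [DecidableEq 𝒴] (P : 𝒴 → ℝ)
    (hP0 : ∀ y, 0 ≤ P y) (hP1 : ∑ y, P y = 1)
    (S : Finset 𝒴) (ℓ : ℕ) (hS : S.card = ℓ) :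
    ∑ y ∈ S, P y ≤
      ∑ y, P y * min 1 ((ℓ : ℝ) / (Finset.univ.filter fun y' => P y ≤ P y').card) := by
  classical
  set f : 𝒴 → ℝ := fun y => min 1 ((ℓ : ℝ) / (Finset.univ.filter fun y' => P y ≤ P y').card)
    with hf
  have hf0 : ∀ y, 0 ≤ f y := by
    intro y
    have h1 : (0:ℕ) < (Finset.univ.filter fun y' => P y ≤ P y').card :=
      card_pos.mpr ⟨y, by simp⟩
    have : (0:ℝ) < (Finset.univ.filter fun y' => P y ≤ P y').card := by exact_mod_cast h1
    apply le_min (by norm_num)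
    positivity
  -- key combinatorial lemma
  have key : ∀ t : ℝ, ((S.filter fun y => t < P y).card : ℝ) ≤
      ∑ y ∈ univ.filter (fun y => t < P y), f y := by
    intro t
    set B := univ.filter (fun y => t < P y) with hB
    have hSB : S.filter (fun y => t < P y) ⊆ B := by
      intro y hy
      simp only [hB, mem_filter, mem_univ, true_and]
      exact (mem_filter.mp hy).2
    rcases Nat.eq_zero_or_pos B.card with h0 | hpos
    · have : (S.filter fun y => t < P y).card = 0 :=
        Nat.le_zero.mp (h0 ▸ card_le_card hSB)
      rw [this]
      simp only [Nat.cast_zero]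
      exact Finset.sum_nonneg fun y _ => hf0 y
    · have hBpos : (0:ℝ) < B.card := by exact_mod_cast hpos
      have hlb : ∀ y ∈ B, min 1 ((ℓ:ℝ)/B.card) ≤ f y := by
        intro y hy
        have hy' : t < P y := by
          simpa [hB] using hy
        have hsub : (Finset.univ.filter fun y' => P y ≤ P y') ⊆ B := by
          intro z hz
          rw [hB, mem_filter]
          simp only [mem_filter, mem_univ, true_and] at hz
          exact ⟨mem_univ z, lt_of_lt_of_le hy' hz⟩
        have hle : ((Finset.univ.filter fun y' => P y ≤ P y').card : ℝ) ≤ B.card := by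
          exact_mod_cast card_le_card hsub
        have hpos' : (0:ℝ) < (Finset.univ.filter fun y' => P y ≤ P y').card := by
          have : (0:ℕ) < (Finset.univ.filter fun y' => P y ≤ P y').card :=
            card_pos.mpr ⟨y, by simp⟩
          exact_mod_cast this
        apply min_le_min le_rfl
        exact div_le_div_of_nonneg_left (by positivity) hpos' hle
      have h2 : (B.card : ℝ) * min 1 ((ℓ:ℝ)/B.card) ≤ ∑ y ∈ B, f y := by
        have := Finset.card_nsmul_le_sum B _ _ hlb
        simpa [nsmul_eq_mul] using this
      refine le_trans ?_ h2
      have hcardS : ((S.filter fun y => t < P y).card : ℝ) ≤ ℓ := by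
        have : (S.filter fun y => t < P y).card ≤ ℓ := hS ▸ card_le_card (filter_subset _ _)
        exact_mod_cast this
      have hcardB : ((S.filter fun y => t < P y).card : ℝ) ≤ B.card := by
        exact_mod_cast card_le_card hSB
      rcases le_or_gt (1:ℝ) ((ℓ:ℝ)/B.card) with h | h
      · rw [min_eq_left h]
        simpa using hcardB
      · rw [min_eq_right h.le]
        rw [mul_div_cancel₀ _ (ne_of_gt hBpos)]
        exact hcardS
  -- each P y ≤ 1
  have hPle1 : ∀ y, P y ≤ 1 := by
    intro y
    calc P y ≤ ∑ y, P y := Finset.single_le_sum (fun i _ => hP0 i) (mem_univ y)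
    _ = 1 := hP1
  -- integral of indicator
  have integ : ∀ (c p : ℝ), 0 ≤ p → p ≤ 1 →
      ∫ t in Set.Ioc (0:ℝ) 1, (Set.Iio p).indicator (fun _ => c) t = c * p := by
    intro c p hp0 hp1
    rw [MeasureTheory.setIntegral_indicator measurableSet_Iio, MeasureTheory.setIntegral_const]
    have hset : Set.Ioc (0:ℝ) 1 ∩ Set.Iio p = Set.Ioo 0 p := by
      ext x
      simp only [Set.mem_inter_iff, Set.mem_Ioc, Set.mem_Iio, Set.mem_Ioo]
      constructor
      · rintro ⟨⟨h1, h2⟩, h3⟩; exact ⟨h1, h3⟩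
      · rintro ⟨h1, h2⟩; exact ⟨⟨h1, le_trans h2.le hp1⟩, h2⟩
    rw [hset, Real.volume_real_Ioo_of_le hp0]
    rw [smul_eq_mul]; ring
  have hmeas : (volume.restrict (Set.Ioc (0:ℝ) 1)) Set.univ < ⊤ := by
    rw [Measure.restrict_apply_univ, Real.volume_Ioc]
    simp
  have hint : ∀ (c p : ℝ),
      Integrable ((Set.Iio p).indicator (fun _ => c)) (volume.restrict (Set.Ioc (0:ℝ) 1)) := by
    intro c p
    rw [MeasureTheory.integrable_indicator_iff measurableSet_Iio]
    apply (MeasureTheory.integrableOn_const_iff (C := c)).mpr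
    right
    exact lt_of_le_of_lt (measure_mono (Set.subset_univ _)) hmeas
  calc ∑ y ∈ S, P y
      = ∑ y ∈ S, ∫ t in Set.Ioc (0:ℝ) 1, (Set.Iio (P y)).indicator (fun _ => (1:ℝ)) t := by
        refine Finset.sum_congr rfl fun y _ => ?_
        rw [integ 1 (P y) (hP0 y) (hPle1 y), one_mul]
    _ = ∫ t in Set.Ioc (0:ℝ) 1, ∑ y ∈ S, (Set.Iio (P y)).indicator (fun _ => (1:ℝ)) t := by
        rw [MeasureTheory.integral_finset_sum _ (fun y _ => hint 1 (P y))]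
    _ ≤ ∫ t in Set.Ioc (0:ℝ) 1, ∑ y, (Set.Iio (P y)).indicator (fun _ => f y) t := by
        apply MeasureTheory.integral_mono
        · exact MeasureTheory.integrable_finset_sum _ (fun y _ => hint 1 (P y))
        · exact MeasureTheory.integrable_finset_sum _ (fun y _ => hint (f y) (P y))
        · intro t
          have hL : ∑ y ∈ S, (Set.Iio (P y)).indicator (fun _ => (1:ℝ)) t
              = ((S.filter fun y => t < P y).card : ℝ) := by
            simp only [Set.indicator_apply, Set.mem_Iio]
            rw [Finset.sum_boole]
          have hR : ∑ y, (Set.Iio (P y)).indicator (fun _ => f y) t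
              = ∑ y ∈ univ.filter (fun y => t < P y), f y := by
            rw [Finset.sum_filter]
            simp only [Set.indicator_apply, Set.mem_Iio]
          simp only [Pi.add_apply]
          rw [hL, hR]
          exact key t
    _ = ∑ y, ∫ t in Set.Ioc (0:ℝ) 1, (Set.Iio (P y)).indicator (fun _ => f y) t := by
        rw [MeasureTheory.integral_finset_sum _ (fun y _ => hint (f y) (P y))]
    _ = ∑ y, P y * f y := by
        refine Finset.sum_congr rfl fun y _ => ?_
        rw [integ (f y) (P y) (hP0 y) (hPle1 y), mul_comm]
end

section
/- Let μ* be a bijection between two n-element sets 𝒰_a and 𝒰_b, and let ℳ(μ*, d) be the set of μ*-maximal matchings μ ⊆ 𝒰_a × 𝒰_b with |μ \ μ*| = d. Then |ℳ(μ*, d)| ≤ n^{2d}/d!. -/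
/-- A binary relation in which every left element and every right element
appears in at most one pair. -/
def IsMatchingRel {α β : Type*} (μ : Set (α × β)) : Prop :=
  ∀ p ∈ μ, ∀ q ∈ μ, (p.1 = q.1 ∨ p.2 = q.2) → p = q

/-- `μ` is `μ*`-maximal: no pair of `μ*` can be added to `μ` without destroying
the matching property. -/
def IsMuStarMaximal {α β : Type*} (μstar μ : Set (α × β)) : Prop :=
  ∀ p ∈ μstar, p.1 ∈ Prod.fst '' μ ∨ p.2 ∈ Prod.snd '' μ

section Aux
variable {α β : Type*} (e : α ≃ β)

lemma key_decomp {μ : Set (α × β)} (hμ : IsMatchingRel μ)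
    (hm : IsMuStarMaximal {p : α × β | e p.1 = p.2} μ) :
    μ = (μ \ {p : α × β | e p.1 = p.2}) ∪
      {p : α × β | e p.1 = p.2 ∧ p.1 ∉ Prod.fst '' (μ \ {p : α × β | e p.1 = p.2})
        ∧ p.2 ∉ Prod.snd '' (μ \ {p : α × β | e p.1 = p.2})} := by
  ext p
  constructor
  · intro hp
    by_cases hps : e p.1 = p.2
    · right
      refine ⟨hps, ?_, ?_⟩
      · rintro ⟨q, hq, hq1⟩
        have := hμ q hq.1 p hp (Or.inl hq1)
        exact hq.2 (this ▸ hps)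
      · rintro ⟨q, hq, hq2⟩
        have := hμ q hq.1 p hp (Or.inr hq2)
        exact hq.2 (this ▸ hps)
    · exact Or.inl ⟨hp, hps⟩
  · rintro (hp | ⟨hps, h1, h2⟩)
    · exact hp.1
    · rcases hm p hps with ⟨q, hq, hq1⟩ | ⟨q, hq, hq2⟩
      · by_cases hqs : e q.1 = q.2
        · have : q = p := Prod.ext hq1 (by rw [← hqs, ← hps, hq1])
          exact this ▸ hq
        · exact absurd ⟨q, ⟨hq, hqs⟩, hq1⟩ h1
      · by_cases hqs : e q.1 = q.2
        · have h1' : q.1 = p.1 := e.injective (by rw [hqs, hps, hq2])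
          have : q = p := Prod.ext h1' hq2
          exact this ▸ hq
        · exact absurd ⟨q, ⟨hq, hqs⟩, hq2⟩ h2

lemma matching_eq_of_diff_eq {μ ν : Set (α × β)}
    (hμ : IsMatchingRel μ) (hν : IsMatchingRel ν)
    (hμm : IsMuStarMaximal {p : α × β | e p.1 = p.2} μ)
    (hνm : IsMuStarMaximal {p : α × β | e p.1 = p.2} ν)
    (h : μ \ {p : α × β | e p.1 = p.2} = ν \ {p : α × β | e p.1 = p.2}) : μ = ν := by
  rw [key_decomp e hμ hμm, key_decomp e hν hνm, h]

end Aux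

/-- `|ℳ(μ*, d)| ≤ n^{2d}/d!`. -/
theorem stmt_10 {α β : Type*} [Fintype α] [Fintype β] (n : ℕ)
    (hα : Fintype.card α = n) (hβ : Fintype.card β = n)
    (e : α ≃ β) (d : ℕ) :
    (Nat.card {μ : Set (α × β) // IsMatchingRel μ ∧
        IsMuStarMaximal {p : α × β | e p.1 = p.2} μ ∧
        Nat.card ↥(μ \ {p : α × β | e p.1 = p.2}) = d} : ℝ) ≤
      (n : ℝ) ^ (2 * d) / (Nat.factorial d) := by
  classical
  set μs : Set (α × β) := {p : α × β | e p.1 = p.2} with hμs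
  set X := {μ : Set (α × β) // IsMatchingRel μ ∧ IsMuStarMaximal μs μ ∧
    Nat.card ↥(μ \ μs) = d} with hX
  have enum : ∀ μ : X, Fin d ≃ ↥((μ : Set (α × β)) \ μs) := by
    intro μ
    exact (Finite.equivFinOfCardEq μ.2.2.2).symm
  set F : X × Equiv.Perm (Fin d) → (Fin d → α) × (Fin d → β) :=
    fun q => (fun i => ((enum q.1 (q.2 i)) : α × β).1,
              fun i => ((enum q.1 (q.2 i)) : α × β).2) with hF
  have hFinj : Function.Injective F := by
    rintro ⟨μ, π⟩ ⟨ν, ρ⟩ h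
    have h1 := congrArg Prod.fst h
    have h2 := congrArg Prod.snd h
    simp only [hF] at h1 h2
    have hg : (fun i => ((enum μ (π i)) : α × β)) =
        (fun i => ((enum ν (ρ i)) : α × β)) := by
      funext i
      exact Prod.ext (congrFun h1 i) (congrFun h2 i)
    have hrange : (μ : Set (α × β)) \ μs = (ν : Set (α × β)) \ μs := by
      have r1 : Set.range (fun i => ((enum μ (π i)) : α × β)) = (μ : Set (α × β)) \ μs := by
        have : (fun i => ((enum μ (π i)) : α × β)) =
            (Subtype.val ∘ ⇑(enum μ)) ∘ ⇑π := rfl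
        rw [this, Function.Surjective.range_comp π.surjective,
          Function.Surjective.range_comp (enum μ).surjective, Subtype.range_coe]
      have r2 : Set.range (fun i => ((enum ν (ρ i)) : α × β)) = (ν : Set (α × β)) \ μs := by
        have : (fun i => ((enum ν (ρ i)) : α × β)) =
            (Subtype.val ∘ ⇑(enum ν)) ∘ ⇑ρ := rfl
        rw [this, Function.Surjective.range_comp ρ.surjective,
          Function.Surjective.range_comp (enum ν).surjective, Subtype.range_coe]
      rw [← r1, ← r2, hg]
    have hμν : μ = ν := Subtype.ext
      (matching_eq_of_diff_eq e μ.2.1 ν.2.1 μ.2.2.1 ν.2.2.1 hrange)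
    subst hμν
    have hπρ : π = ρ := by
      ext i
      have := congrFun hg i
      have := Subtype.val_injective this
      exact congrArg Fin.val ((enum μ).injective this)
    rw [hπρ]
  have hcard : Nat.card X * d.factorial ≤ n ^ (2 * d) := by
    have h1 : Nat.card X * d.factorial = Nat.card (X × Equiv.Perm (Fin d)) := by
      simp [Nat.card_prod, Nat.card_eq_fintype_card, Fintype.card_perm, Fintype.card_fin]
    have h2 : Nat.card (X × Equiv.Perm (Fin d)) ≤
        Nat.card ((Fin d → α) × (Fin d → β)) :=
      Nat.card_le_card_of_injective F hFinj
    have h3 : Nat.card ((Fin d → α) × (Fin d → β)) = n ^ (2 * d) := by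
      rw [Nat.card_prod, Nat.card_eq_fintype_card, Nat.card_eq_fintype_card,
        Fintype.card_fun, Fintype.card_fun, Fintype.card_fin, hα, hβ,
        two_mul, pow_add]
    omega
  rw [le_div_iff₀ (by positivity)]
  calc (Nat.card X : ℝ) * (d.factorial : ℝ)
      = ((Nat.card X * d.factorial : ℕ) : ℝ) := by push_cast; ring
    _ ≤ ((n ^ (2*d) : ℕ) : ℝ) := by exact_mod_cast hcard
    _ = (n : ℝ) ^ (2*d) := by push_cast; ring
end

section
/- For f ∈ {0,1}^ℓ, let k1(f) be the number of ones in f, k11(f) the number of indices i with f(i) = f(i+1) = 1 (0 ≤ i < ℓ−1), and k11°(f) the analogous count with indices taken cyclically modulo ℓ. Define b_ℓ(x,y) = Σ_f x^{k1(f)} y^{k11(f)} and b_ℓ°(x,y) = Σ_f x^{k1(f)} y^{k11°(f)}. Then for all ℓ ≥ 1, x ≥ 0, y ≥ 1: b_ℓ(x,y)² ≤ b_2°(x,y)^ℓ. -/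
open Finset

/-- Number of ones in `f`. -/
def k1 {ℓ : ℕ} (f : Fin ℓ → Bool) : ℕ :=
  (Finset.univ.filter fun i => f i = true).card

/-- Number of linearly adjacent pairs of ones in `f`. -/
def k11 {ℓ : ℕ} (f : Fin ℓ → Bool) : ℕ :=
  (Finset.univ.filter fun i : Fin ℓ =>
    (i : ℕ) + 1 < ℓ ∧ f i = true ∧ f (finRotate ℓ i) = true).card

/-- Number of cyclically adjacent pairs of ones in `f`. -/
def k11c {ℓ : ℕ} (f : Fin ℓ → Bool) : ℕ :=
  (Finset.univ.filter fun i : Fin ℓ => f i = true ∧ f (finRotate ℓ i) = true).card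

/-- Path generating function `b_ℓ(x,y)`. -/
def bPath (ℓ : ℕ) (x y : ℝ) : ℝ :=
  ∑ f : Fin ℓ → Bool, x ^ k1 f * y ^ k11 f

/-- Cycle generating function `b_ℓ°(x,y)`. -/
def bCyc (ℓ : ℕ) (x y : ℝ) : ℝ :=
  ∑ f : Fin ℓ → Bool, x ^ k1 f * y ^ k11c f

lemma bCyc_two (x y : ℝ) : bCyc 2 x y = 1 + 2*x + x^2*y^2 := by
  rw [bCyc, ← (Fin.consEquiv (fun _ : Fin 2 => Bool)).sum_comp, Fintype.sum_prod_type]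
  simp only [Fintype.sum_bool]
  rw [← (Equiv.funUnique (Fin 1) Bool).symm.sum_comp, Fintype.sum_bool,
      ← (Equiv.funUnique (Fin 1) Bool).symm.sum_comp, Fintype.sum_bool]
  norm_num [show k1 ((Fin.consEquiv fun _ : Fin 2 => Bool) (true, uniqueElim (α := fun _ : Fin 1 => Bool) true)) = 2 from by decide,
    show k11c ((Fin.consEquiv fun _ : Fin 2 => Bool) (true, uniqueElim (α := fun _ : Fin 1 => Bool) true)) = 2 from by decide,
    show k1 ((Fin.consEquiv fun _ : Fin 2 => Bool) (true, uniqueElim (α := fun _ : Fin 1 => Bool) false)) = 1 from by decide,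
    show k11c ((Fin.consEquiv fun _ : Fin 2 => Bool) (true, uniqueElim (α := fun _ : Fin 1 => Bool) false)) = 0 from by decide,
    show k1 ((Fin.consEquiv fun _ : Fin 2 => Bool) (false, uniqueElim (α := fun _ : Fin 1 => Bool) true)) = 1 from by decide,
    show k11c ((Fin.consEquiv fun _ : Fin 2 => Bool) (false, uniqueElim (α := fun _ : Fin 1 => Bool) true)) = 0 from by decide,
    show k1 ((Fin.consEquiv fun _ : Fin 2 => Bool) (false, uniqueElim (α := fun _ : Fin 1 => Bool) false)) = 0 from by decide,
    show k11c ((Fin.consEquiv fun _ : Fin 2 => Bool) (false, uniqueElim (α := fun _ : Fin 1 => Bool) false)) = 0 from by decide]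
  ring

lemma k1_cons {n : ℕ} (b : Bool) (g : Fin n → Bool) :
    k1 (Fin.cons b g : Fin (n+1) → Bool) = (if b then 1 else 0) + k1 g := by
  simp only [k1, Finset.card_filter]
  rw [Fin.sum_univ_succ]
  simp [Fin.cons_zero, Fin.cons_succ]

lemma k11_cons {n : ℕ} (b : Bool) (g : Fin (n+1) → Bool) :
    k11 (Fin.cons b g : Fin (n+2) → Bool)
      = (if b = true ∧ g 0 = true then 1 else 0) + k11 g := by
  simp only [k11, Finset.card_filter]
  rw [Fin.sum_univ_succ]
  congr 1
  · have h1 : finRotate (n+2) 0 = Fin.succ 0 := by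
      rw [finRotate_succ_apply]; rfl
    simp [Fin.cons_zero, h1, Fin.cons_succ]
  · apply Finset.sum_congr rfl
    intro j _
    by_cases hc : (j : ℕ) + 1 < n + 1
    · have hs : ((j.succ : Fin (n+2)) : ℕ) + 1 < n + 2 := by simp; omega
      have h2 : finRotate (n+2) j.succ = Fin.succ (finRotate (n+1) j) := by
        rw [finRotate_succ_apply, finRotate_succ_apply]
        have e2 : ((1 : Fin (n+2)) : ℕ) = 1 := by
          simp [Fin.val_one']
        have e1 : ((1 : Fin (n+1)) : ℕ) = 1 := by
          simp only [Fin.val_one']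
          exact Nat.mod_eq_of_lt (by omega)
        ext
        simp only [Fin.val_add, Fin.val_succ, e1, e2]
        rw [Nat.mod_eq_of_lt (by omega), Nat.mod_eq_of_lt (by omega)]
      simp only [h2, Fin.cons_succ, Fin.val_succ]
      have hiff : (((j : ℕ) + 1) + 1 < n + 2 ∧ g j = true ∧ g (finRotate (n+1) j) = true)
          ↔ ((j : ℕ) + 1 < n + 1 ∧ g j = true ∧ g (finRotate (n+1) j) = true) := by
        constructor <;> rintro ⟨h, h'⟩ <;> exact ⟨by omega, h'⟩
      rw [if_congr hiff rfl rfl]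
    · have : ¬ ((j.succ : Fin (n+2)) : ℕ) + 1 < n + 2 := by simp; omega
      simp [this, hc]; intro h; omega

/-- The pair `(p, q)` of path generating functions conditioned on the first bit. -/
noncomputable def pq (x y : ℝ) : ℕ → ℝ × ℝ
  | 0 => (1, 0)
  | n+1 => ((pq x y n).1 + (pq x y n).2, x * (pq x y n).1 + x * y * (pq x y n).2)

lemma ite_zero_add_ite (c : Prop) [Decidable c] (w : ℝ) :
    (if c then (0:ℝ) else w) + (if c then w else 0) = w := by
  split <;> ring

lemma pq_split (x y : ℝ) (n : ℕ) :
    (∑ f : Fin (n+1) → Bool, if f 0 = true then 0 else x ^ k1 f * y ^ k11 f)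
        = (pq x y (n+1)).1
  ∧ (∑ f : Fin (n+1) → Bool, if f 0 = true then x ^ k1 f * y ^ k11 f else 0)
        = (pq x y (n+1)).2 := by
  induction n with
  | zero =>
    constructor <;>
    · rw [← (Equiv.funUnique (Fin 1) Bool).symm.sum_comp, Fintype.sum_bool]
      norm_num [pq,
        show (uniqueElim (α := fun _ : Fin 1 => Bool) true) 0 = true from by decide,
        show (uniqueElim (α := fun _ : Fin 1 => Bool) false) 0 = false from by decide,
        show k1 (uniqueElim (α := fun _ : Fin 1 => Bool) true) = 1 from by decide,
        show k1 (uniqueElim (α := fun _ : Fin 1 => Bool) false) = 0 from by decide,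
        show k11 (uniqueElim (α := fun _ : Fin 1 => Bool) true) = 0 from by decide,
        show k11 (uniqueElim (α := fun _ : Fin 1 => Bool) false) = 0 from by decide]
  | succ n ih =>
    obtain ⟨ih1, ih2⟩ := ih
    have hfull : (∑ g : Fin (n+1) → Bool, x ^ k1 g * y ^ k11 g)
        = (pq x y (n+1)).1 + (pq x y (n+1)).2 := by
      rw [← ih1, ← ih2, ← Finset.sum_add_distrib]
      exact Finset.sum_congr rfl fun g _ => (ite_zero_add_ite _ _).symm
    have hce : ∀ (b : Bool) (g : Fin (n+1) → Bool),
        (Fin.consEquiv (fun _ : Fin (n+2) => Bool)) (b, g) = Fin.cons b g := fun _ _ => rfl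
    have hT0 : (∑ g : Fin (n+1) → Bool,
        if (Fin.cons true g : Fin (n+2) → Bool) 0 = true then (0:ℝ)
          else x ^ k1 (Fin.cons true g) * y ^ k11 (Fin.cons true g)) = 0 := by
      simp [Fin.cons_zero]
    have hF0 : (∑ g : Fin (n+1) → Bool,
        if (Fin.cons false g : Fin (n+2) → Bool) 0 = true
          then x ^ k1 (Fin.cons false g) * y ^ k11 (Fin.cons false g) else (0:ℝ)) = 0 := by
      simp [Fin.cons_zero]
    have hFsum : (∑ g : Fin (n+1) → Bool,
        if (Fin.cons false g : Fin (n+2) → Bool) 0 = true then (0:ℝ)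
          else x ^ k1 (Fin.cons false g) * y ^ k11 (Fin.cons false g))
        = (pq x y (n+1)).1 + (pq x y (n+1)).2 := by
      rw [← hfull]
      apply Finset.sum_congr rfl
      intro g _
      simp [Fin.cons_zero, k1_cons, k11_cons]
    have hTsum : (∑ g : Fin (n+1) → Bool,
        if (Fin.cons true g : Fin (n+2) → Bool) 0 = true
          then x ^ k1 (Fin.cons true g) * y ^ k11 (Fin.cons true g) else (0:ℝ))
        = x * (pq x y (n+1)).1 + x * y * (pq x y (n+1)).2 := by
      rw [← ih1, ← ih2, Finset.mul_sum, Finset.mul_sum, ← Finset.sum_add_distrib]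
      apply Finset.sum_congr rfl
      intro g _
      by_cases h0 : g 0 = true <;>
        simp [Fin.cons_zero, k1_cons, k11_cons, h0, pow_add] <;> ring
    constructor
    · rw [← (Fin.consEquiv (fun _ : Fin (n+2) => Bool)).sum_comp, Fintype.sum_prod_type,
        Fintype.sum_bool]
      simp only [hce]
      rw [hT0, hFsum]
      show _ = (pq x y (n+1)).1 + (pq x y (n+1)).2
      ring
    · rw [← (Fin.consEquiv (fun _ : Fin (n+2) => Bool)).sum_comp, Fintype.sum_prod_type,
        Fintype.sum_bool]
      simp only [hce]
      rw [hTsum, hF0]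
      show _ = x * (pq x y (n+1)).1 + x * y * (pq x y (n+1)).2
      ring

lemma bPath_eq (x y : ℝ) (n : ℕ) :
    bPath (n+1) x y = (pq x y (n+1)).1 + (pq x y (n+1)).2 := by
  obtain ⟨h1, h2⟩ := pq_split x y n
  rw [bPath, ← h1, ← h2, ← Finset.sum_add_distrib]
  exact Finset.sum_congr rfl fun g _ => (ite_zero_add_ite _ _).symm

lemma pq_norm (x y : ℝ) (hx : 0 ≤ x) (hy : 1 ≤ y) (n : ℕ) :
    x * (pq x y (n+1)).1 ^ 2 + (pq x y (n+1)).2 ^ 2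
      ≤ x * (1+x) * (1 + 2*x + x^2*y^2) ^ n := by
  induction n with
  | zero => simp [pq]; ring_nf; nlinarith [sq_nonneg x]
  | succ n ih =>
    set p := (pq x y (n+1)).1
    set q := (pq x y (n+1)).2
    have hpq : pq x y (n+2) = (p + q, x * p + x * y * q) := rfl
    rw [hpq]
    have hB0 : (0:ℝ) ≤ 1 + 2*x + x^2*y^2 := by positivity
    have key : x * (p + q) ^ 2 + (x * p + x * y * q) ^ 2
        ≤ (1 + 2*x + x^2*y^2) * (x * p^2 + q^2) := by
      have hpos : (0:ℝ) < 1 + x * y^2 := by positivity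
      rw [← mul_le_mul_iff_right₀ hpos]
      nlinarith [sq_nonneg (x*(1 + x*y^2)*p - (1 + x*y)*q),
        mul_nonneg (mul_nonneg hx (sq_nonneg (y-1))) (sq_nonneg q)]
    calc x * (p + q) ^ 2 + (x * p + x * y * q) ^ 2
        ≤ (1 + 2*x + x^2*y^2) * (x * p^2 + q^2) := key
      _ ≤ (1 + 2*x + x^2*y^2) * (x * (1+x) * (1 + 2*x + x^2*y^2) ^ n) :=
          mul_le_mul_of_nonneg_left ih hB0
      _ = x * (1+x) * (1 + 2*x + x^2*y^2) ^ (n+1) := by ring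

/-- `b_ℓ(x,y)² ≤ b_2°(x,y)^ℓ` for `ℓ ≥ 1`, `x ≥ 0`, `y ≥ 1`. -/
theorem stmt_14 (ℓ : ℕ) (hℓ : 1 ≤ ℓ) (x y : ℝ) (hx : 0 ≤ x) (hy : 1 ≤ y) :
    (bPath ℓ x y) ^ 2 ≤ (bCyc 2 x y) ^ ℓ := by
  obtain ⟨n, rfl⟩ : ∃ n, ℓ = n + 1 := ⟨ℓ - 1, by omega⟩
  rw [bCyc_two, bPath_eq]
  have hB0 : (0:ℝ) ≤ 1 + 2*x + x^2*y^2 := by positivity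
  have hy2 : (0:ℝ) ≤ y^2 - 1 := by nlinarith
  have h2 : (1+x)^2 ≤ 1 + 2*x + x^2*y^2 := by
    nlinarith [mul_nonneg (sq_nonneg x) hy2]
  rcases eq_or_lt_of_le hx with hx0 | hx'
  · subst hx0
    have hpq : ∀ m, pq 0 y m = (1, 0) := by
      intro m
      induction m with
      | zero => rfl
      | succ m ihm => simp [pq, ihm]
    rw [hpq]
    norm_num
  · set p := (pq x y (n+1)).1
    set q := (pq x y (n+1)).2
    have hN := pq_norm x y hx hy n
    have hCS : x * (p + q)^2 ≤ (1+x) * (x * p^2 + q^2) := by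
      nlinarith [sq_nonneg (q - x*p)]
    have hkey : x * (p + q)^2 ≤ x * (1 + 2*x + x^2*y^2) ^ (n+1) := by
      calc x * (p + q)^2 ≤ (1+x) * (x * p^2 + q^2) := hCS
        _ ≤ (1+x) * (x * (1+x) * (1 + 2*x + x^2*y^2) ^ n) :=
            mul_le_mul_of_nonneg_left hN (by positivity)
        _ = x * ((1+x)^2 * (1 + 2*x + x^2*y^2) ^ n) := by ring
        _ ≤ x * ((1 + 2*x + x^2*y^2) * (1 + 2*x + x^2*y^2) ^ n) :=
            mul_le_mul_of_nonneg_left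
              (mul_le_mul_of_nonneg_right h2 (pow_nonneg hB0 n)) hx
        _ = x * (1 + 2*x + x^2*y^2) ^ (n+1) := by ring
    exact le_of_mul_le_mul_left hkey hx'
end

section
/- With p a 2×2 probability matrix, p1* = p10+p11, p*1 = p01+p11, and z ≥ 1: (1 + 2·p1*·p*1·(z−1) + p11²(z−1)²)² ≤ exp(2·p1*·p*1·(z²−1) + p11²(z²−1)²). -/
theorem stmt_17 (p00 p01 p10 p11 z : ℝ)
    (h00 : 0 ≤ p00) (h01 : 0 ≤ p01) (h10 : 0 ≤ p10) (h11 : 0 ≤ p11)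
    (hsum : p00 + p01 + p10 + p11 = 1) (hz : 1 ≤ z) :
    (1 + 2 * ((p10 + p11) * (p01 + p11)) * (z - 1) + p11 ^ 2 * (z - 1) ^ 2) ^ 2 ≤
      Real.exp (2 * ((p10 + p11) * (p01 + p11)) * (z ^ 2 - 1) +
        p11 ^ 2 * (z ^ 2 - 1) ^ 2) := by
  set t : ℝ := 2 * ((p10 + p11) * (p01 + p11)) * (z - 1) + p11 ^ 2 * (z - 1) ^ 2 with ht
  have hz1 : (0:ℝ) ≤ z - 1 := by linarith
  have htn : 0 ≤ t := by
    have := mul_nonneg (mul_nonneg (add_nonneg h10 h11) (add_nonneg h01 h11)) hz1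
    nlinarith [sq_nonneg (p11 * (z - 1))]
  have h1 : (1 + t) ^ 2 ≤ Real.exp t ^ 2 := by
    have := Real.add_one_le_exp t
    nlinarith [Real.exp_pos t]
  have h2 : Real.exp t ^ 2 = Real.exp (2 * t) := by
    rw [← Real.exp_nat_mul]; norm_num [mul_comm]
  have h3 : Real.exp (2 * t) ≤ Real.exp (2 * ((p10 + p11) * (p01 + p11)) * (z ^ 2 - 1) +
        p11 ^ 2 * (z ^ 2 - 1) ^ 2) := by
    apply Real.exp_le_exp.2
    rw [ht]
    nlinarith [mul_nonneg (mul_nonneg (add_nonneg h10 h11) (add_nonneg h01 h11)) (sq_nonneg (z-1)),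
      mul_nonneg (mul_nonneg (sq_nonneg p11) (sq_nonneg (z-1))) hz1,
      mul_nonneg (mul_nonneg (mul_nonneg (sq_nonneg p11) (sq_nonneg (z-1))) hz1) hz1]
  have e : (1 + 2 * ((p10 + p11) * (p01 + p11)) * (z - 1) + p11 ^ 2 * (z - 1) ^ 2)
      = 1 + t := by rw [ht]; ring
  rw [e]
  exact h1.trans (h2.le.trans h3)
end
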